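/- For every word w ∈ 𝔞*, the map λ_w : l∞(X) → l∞(X) is a *-homomorphism, and λ_w(D_X) ⊆ D_X. -/
import Mathlib


open scoped ENNReal
open Classical
set_option linter.unusedSectionVars false
set_option synthInstance.maxHeartbeats 1000000
set_option maxHeartbeats 1000000

noncomputable section

variable {𝔞 : Type*} [Fintype 𝔞] [Nonempty 𝔞] [TopologicalSpace 𝔞] [DiscreteTopology 𝔞]

/-- The one-sided shift map on the full one-sided shift `𝔞^ℕ`. -/
def shift (x : ℕ → 𝔞) : ℕ → 𝔞 := fun n => x (n + 1)

/-- Concatenation `u x` of a finite word `u` with an infinite sequence `x`. -/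
def wcat (u : List 𝔞) (x : ℕ → 𝔞) : ℕ → 𝔞 := fun n =>
  if h : n < u.length then u.get ⟨n, h⟩ else x (n - u.length)

/-- `l∞(X)`: the C*-algebra of bounded complex-valued functions on `X`,
with pointwise operations and the supremum norm. -/
abbrev Linf (X : Set (ℕ → 𝔞)) : Type _ := lp (fun _ : X => ℂ) ∞

/-- The set `C(u,v) = {vx : x ∈ X, vx ∈ X, ux ∈ X}`. -/
def cyl (X : Set (ℕ → 𝔞)) (u v : List 𝔞) : Set (ℕ → 𝔞) :=
  {y | ∃ x, x ∈ X ∧ wcat u x ∈ X ∧ wcat v x ∈ X ∧ y = wcat v x}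

/-- The indicator function of a subset `S`, as an element of `l∞(X)`. -/
def chi (X S : Set (ℕ → 𝔞)) : Linf X :=
  ⟨fun x => S.indicator (fun _ => (1 : ℂ)) (x : ℕ → 𝔞),
    memℓp_infty ⟨1, by
      rintro r ⟨x, rfl⟩
      by_cases h : (x : ℕ → 𝔞) ∈ S <;> simp [Set.indicator_apply, h]⟩⟩

/-- `D_X`: the smallest C*-subalgebra (norm-closed, star-closed subalgebra) of `l∞(X)`
containing the indicator functions `χ_{C(u,v)}` for all words `u, v`. -/
def Dalg (X : Set (ℕ → 𝔞)) : NonUnitalStarSubalgebra ℂ (Linf X) :=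
  (NonUnitalStarAlgebra.adjoin ℂ
    {f : Linf X | ∃ u v : List 𝔞, f = chi X (cyl X u v)}).topologicalClosure

lemma chi_cyl_mem_Dalg (X : Set (ℕ → 𝔞)) (u v : List 𝔞) : chi X (cyl X u v) ∈ Dalg X :=
  (NonUnitalStarAlgebra.adjoin ℂ _).le_topologicalClosure
    (NonUnitalStarAlgebra.subset_adjoin ℂ _ ⟨u, v, rfl⟩)

/-- The map `λ_w : l∞(X) → l∞(X)`, `λ_w(f)(x) = f(wx)` if `wx ∈ X`, and `0` otherwise. -/
def lambdaMap (X : Set (ℕ → 𝔞)) (w : List 𝔞) (f : Linf X) : Linf X :=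
  ⟨fun x => if h : wcat w (x : ℕ → 𝔞) ∈ X then f ⟨wcat w (x : ℕ → 𝔞), h⟩ else 0,
    memℓp_infty ⟨‖f‖, by
      rintro r ⟨x, rfl⟩
      dsimp only
      split_ifs with h
      · exact lp.norm_apply_le_norm ENNReal.top_ne_zero f _
      · rw [norm_zero]; exact norm_nonneg f⟩⟩

/-! ### Auxiliary lemmas about `wcat` -/

lemma wcat_nil (x : ℕ → 𝔞) : wcat [] x = x := funext fun n => by simp [wcat]

lemma wcat_cons_succ (c : 𝔞) (u : List 𝔞) (x : ℕ → 𝔞) (n : ℕ) :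
    wcat (c :: u) x (n + 1) = wcat u x n := by
  simp only [wcat, List.length_cons]
  by_cases h : n < u.length
  · rw [dif_pos (by omega : n + 1 < u.length + 1), dif_pos h]; rfl
  · rw [dif_neg (by omega), dif_neg h]; congr 1; omega

lemma shift_wcat (c : 𝔞) (u : List 𝔞) (x : ℕ → 𝔞) : shift (wcat (c :: u) x) = wcat u x :=
  funext fun n => wcat_cons_succ c u x n

lemma wcat_append (a b : List 𝔞) (x : ℕ → 𝔞) : wcat (a ++ b) x = wcat a (wcat b x) := by
  induction a with
  | nil => rw [List.nil_append, wcat_nil]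
  | cons c a ih =>
    funext n
    cases n with
    | zero => simp [wcat]
    | succ n => rw [List.cons_append, wcat_cons_succ, wcat_cons_succ, ih]

lemma wcat_apply_add (u : List 𝔞) (x : ℕ → 𝔞) (n : ℕ) : wcat u x (n + u.length) = x n := by
  simp only [wcat]
  rw [dif_neg (by omega)]
  congr 1; omega

lemma wcat_inj (u : List 𝔞) {x y : ℕ → 𝔞} (h : wcat u x = wcat u y) : x = y :=
  funext fun n => by
    have := congrFun h (n + u.length)
    rwa [wcat_apply_add, wcat_apply_add] at this

lemma wcat_apply_lt (u : List 𝔞) (x : ℕ → 𝔞) {n : ℕ} (h : n < u.length) :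
    wcat u x n = u.get ⟨n, h⟩ := dif_pos h

lemma take_eq_of_wcat_eq {w v : List 𝔞} {x y : ℕ → 𝔞} (h : wcat w x = wcat v y)
    (hl : w.length ≤ v.length) : v = w ++ v.drop w.length := by
  have hw : w = v.take w.length := by
    apply List.ext_get
    · simp [List.length_take]; omega
    · intro n h1 h2
      have hn : n < w.length := h1
      have hx := congrFun h n
      rw [wcat_apply_lt w x hn, wcat_apply_lt v y (lt_of_lt_of_le hn hl)] at hx
      simp only [List.get_eq_getElem] at hx ⊢
      rw [List.getElem_take]
      exact hx
  conv_lhs => rw [← List.take_append_drop w.length v, ← hw]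

lemma mem_of_wcat_mem {X : Set (ℕ → 𝔞)} (hXinv : ∀ x ∈ X, shift x ∈ X) (u : List 𝔞)
    {x : ℕ → 𝔞} (h : wcat u x ∈ X) : x ∈ X := by
  induction u with
  | nil => rwa [wcat_nil] at h
  | cons c u ih => exact ih (shift_wcat c u x ▸ hXinv _ h)

/-! ### Auxiliary lemmas about cylinders -/

lemma mem_cyl_nil {X : Set (ℕ → 𝔞)} (w : List 𝔞) (y : ℕ → 𝔞) :
    y ∈ cyl X w [] ↔ y ∈ X ∧ wcat w y ∈ X := by
  constructor
  · rintro ⟨x, hx, hw, -, rfl⟩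
    rw [wcat_nil]
    exact ⟨hx, hw⟩
  · rintro ⟨h1, h2⟩
    exact ⟨y, h1, h2, by rw [wcat_nil]; exact h1, (wcat_nil y).symm⟩

lemma caseA {X : Set (ℕ → 𝔞)} (hXinv : ∀ x ∈ X, shift x ∈ X) (u v' w : List 𝔞) {x : ℕ → 𝔞}
    (hwx : wcat w x ∈ X) :
    wcat w x ∈ cyl X u (w ++ v') ↔ x ∈ cyl X u v' := by
  constructor
  · rintro ⟨y, hy, huy, hvy, heq⟩
    rw [wcat_append] at heq hvy
    exact ⟨y, hy, huy, mem_of_wcat_mem hXinv w hvy, wcat_inj w heq⟩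
  · rintro ⟨y, hy, huy, hv'y, heq⟩
    refine ⟨y, hy, huy, ?_, ?_⟩
    · rw [wcat_append, ← heq]; exact hwx
    · rw [wcat_append, ← heq]

lemma caseB {X : Set (ℕ → 𝔞)} (hXinv : ∀ x ∈ X, shift x ∈ X) (u w' v : List 𝔞) {x : ℕ → 𝔞}
    (hwx : wcat (v ++ w') x ∈ X) :
    wcat (v ++ w') x ∈ cyl X u v ↔ wcat (u ++ w') x ∈ X := by
  rw [wcat_append] at hwx
  constructor
  · rintro ⟨y, hy, huy, hvy, heq⟩
    rw [wcat_append] at heq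
    rw [wcat_append, wcat_inj v heq]
    exact huy
  · intro h
    rw [wcat_append] at h
    exact ⟨wcat w' x, mem_of_wcat_mem hXinv v hwx, h, hwx, by rw [wcat_append]⟩

/-! ### `lambdaMap` basics -/

lemma lambdaMap_apply (X : Set (ℕ → 𝔞)) (w : List 𝔞) (f : Linf X) (x : X) :
    lambdaMap X w f x =
      if h : wcat w (x : ℕ → 𝔞) ∈ X then f ⟨wcat w (x : ℕ → 𝔞), h⟩ else 0 := rfl

lemma chi_apply (X S : Set (ℕ → 𝔞)) (x : X) :
    chi X S x = S.indicator (fun _ => (1 : ℂ)) (x : ℕ → 𝔞) := rfl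

lemma lambdaMap_add (X : Set (ℕ → 𝔞)) (w : List 𝔞) (f g : Linf X) :
    lambdaMap X w (f + g) = lambdaMap X w f + lambdaMap X w g := by
  apply lp.ext
  funext x
  rw [lp.coeFn_add, Pi.add_apply, lambdaMap_apply, lambdaMap_apply, lambdaMap_apply]
  split_ifs with h
  · exact congrFun (lp.coeFn_add f g) _
  · rw [add_zero]

lemma lambdaMap_smul (X : Set (ℕ → 𝔞)) (w : List 𝔞) (c : ℂ) (f : Linf X) :
    lambdaMap X w (c • f) = c • lambdaMap X w f := by
  apply lp.ext
  funext x
  rw [lp.coeFn_smul, Pi.smul_apply, lambdaMap_apply, lambdaMap_apply]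
  split_ifs with h
  · exact congrFun (lp.coeFn_smul c f) _
  · rw [smul_zero]

lemma lambdaMap_mul (X : Set (ℕ → 𝔞)) (w : List 𝔞) (f g : Linf X) :
    lambdaMap X w (f * g) = lambdaMap X w f * lambdaMap X w g := by
  apply lp.ext
  funext x
  rw [lp.infty_coeFn_mul, Pi.mul_apply, lambdaMap_apply, lambdaMap_apply, lambdaMap_apply]
  split_ifs with h
  · exact congrFun (lp.infty_coeFn_mul f g) _
  · rw [mul_zero]

lemma lambdaMap_star (X : Set (ℕ → 𝔞)) (w : List 𝔞) (f : Linf X) :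
    lambdaMap X w (star f) = star (lambdaMap X w f) := by
  apply lp.ext
  funext x
  rw [lp.coeFn_star, Pi.star_apply, lambdaMap_apply, lambdaMap_apply]
  split_ifs with h
  · exact congrFun (lp.coeFn_star f) _
  · rw [star_zero]

lemma lambdaMap_sub (X : Set (ℕ → 𝔞)) (w : List 𝔞) (f g : Linf X) :
    lambdaMap X w (f - g) = lambdaMap X w f - lambdaMap X w g := by
  have h1 := lambdaMap_add X w (f - g) g
  rw [sub_add_cancel] at h1
  rw [h1]; abel

lemma lambdaMap_norm_le (X : Set (ℕ → 𝔞)) (w : List 𝔞) (f : Linf X) :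
    ‖lambdaMap X w f‖ ≤ ‖f‖ := by
  apply lp.norm_le_of_forall_le (norm_nonneg f)
  intro x
  rw [lambdaMap_apply]
  split_ifs with h
  · exact lp.norm_apply_le_norm ENNReal.top_ne_zero f _
  · rw [norm_zero]; exact norm_nonneg f

lemma lambdaMap_continuous (X : Set (ℕ → 𝔞)) (w : List 𝔞) :
    Continuous (lambdaMap X w) := by
  refine (LipschitzWith.of_dist_le_mul (K := 1) fun f g => ?_).continuous
  rw [NNReal.coe_one, one_mul, dist_eq_norm, dist_eq_norm, ← lambdaMap_sub]
  exact lambdaMap_norm_le X w _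

/-! ### The image of a generator under `lambdaMap` -/

lemma lambdaMap_chi_mem {X : Set (ℕ → 𝔞)} (hXinv : ∀ x ∈ X, shift x ∈ X) (w u v : List 𝔞) :
    lambdaMap X w (chi X (cyl X u v)) ∈ Dalg X := by
  by_cases hA : w.length ≤ v.length ∧ v = w ++ v.drop w.length
  · obtain ⟨-, hv⟩ := hA
    have key : lambdaMap X w (chi X (cyl X u v)) =
        chi X (cyl X w []) * chi X (cyl X u (v.drop w.length)) := by
      apply lp.ext
      funext x
      rw [lp.infty_coeFn_mul, Pi.mul_apply, chi_apply, chi_apply, lambdaMap_apply]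
      split_ifs with h
      · rw [chi_apply]
        rw [Set.indicator_of_mem ((mem_cyl_nil w _).2 ⟨x.2, h⟩), one_mul]
        by_cases h2 : (x : ℕ → 𝔞) ∈ cyl X u (v.drop w.length)
        · rw [Set.indicator_of_mem h2, Set.indicator_of_mem
            (by rw [hv]; exact (caseA hXinv u _ w h).2 h2)]
        · rw [Set.indicator_of_notMem h2, Set.indicator_of_notMem
            (by rw [hv]; exact fun hc => h2 ((caseA hXinv u _ w h).1 hc))]
      · rw [Set.indicator_of_notMem (fun hc => h ((mem_cyl_nil w _).1 hc).2), zero_mul]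
    rw [key]
    exact mul_mem (chi_cyl_mem_Dalg X w []) (chi_cyl_mem_Dalg X u _)
  · by_cases hB : v.length ≤ w.length ∧ w = v ++ w.drop v.length
    · obtain ⟨-, hw⟩ := hB
      have key : lambdaMap X w (chi X (cyl X u v)) =
          chi X (cyl X w []) * chi X (cyl X (u ++ w.drop v.length) []) := by
        apply lp.ext
        funext x
        rw [lp.infty_coeFn_mul, Pi.mul_apply, chi_apply, chi_apply, lambdaMap_apply]
        split_ifs with h
        · rw [chi_apply]
          rw [Set.indicator_of_mem ((mem_cyl_nil w _).2 ⟨x.2, h⟩), one_mul]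
          have hiff : wcat w (x : ℕ → 𝔞) ∈ cyl X u v ↔
              wcat (u ++ w.drop v.length) (x : ℕ → 𝔞) ∈ X := by
            conv_lhs => rw [hw]
            exact caseB hXinv u _ v (by rw [← hw]; exact h)
          by_cases h2 : wcat (u ++ w.drop v.length) (x : ℕ → 𝔞) ∈ X
          · rw [Set.indicator_of_mem (hiff.2 h2),
              Set.indicator_of_mem ((mem_cyl_nil _ _).2 ⟨x.2, h2⟩)]
          · rw [Set.indicator_of_notMem (fun hc => h2 (hiff.1 hc)),
              Set.indicator_of_notMem (fun hc => h2 ((mem_cyl_nil _ _).1 hc).2)]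
        · rw [Set.indicator_of_notMem (fun hc => h ((mem_cyl_nil w _).1 hc).2), zero_mul]
      rw [key]
      exact mul_mem (chi_cyl_mem_Dalg X w []) (chi_cyl_mem_Dalg X _ [])
    · have key : lambdaMap X w (chi X (cyl X u v)) = 0 := by
        apply lp.ext
        funext x
        rw [lp.coeFn_zero, Pi.zero_apply, lambdaMap_apply]
        split_ifs with h
        · rw [chi_apply]
          apply Set.indicator_of_notMem
          rintro ⟨y, hy, huy, hvy, heq⟩
          rcases le_total w.length v.length with hle | hle
          · exact hA ⟨hle, take_eq_of_wcat_eq heq hle⟩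
          · exact hB ⟨hle, take_eq_of_wcat_eq heq.symm hle⟩
        · rfl
      rw [key]
      exact zero_mem _

/-- for every word `w ∈ 𝔞*`, the map `λ_w : l∞(X) → l∞(X)` is a
*-homomorphism, and `λ_w(D_X) ⊆ D_X`. -/
theorem lambdaMap_starHom_and_Dalg_invariant (X : Set (ℕ → 𝔞)) (hXclosed : IsClosed X)
    (hXinv : ∀ x ∈ X, shift x ∈ X) (w : List 𝔞) :
    (∀ f g : Linf X, lambdaMap X w (f + g) = lambdaMap X w f + lambdaMap X w g) ∧
    (∀ (c : ℂ) (f : Linf X), lambdaMap X w (c • f) = c • lambdaMap X w f) ∧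
    (∀ f g : Linf X, lambdaMap X w (f * g) = lambdaMap X w f * lambdaMap X w g) ∧
    (∀ f : Linf X, lambdaMap X w (star f) = star (lambdaMap X w f)) ∧
    (∀ f ∈ Dalg X, lambdaMap X w f ∈ Dalg X) := by
  refine ⟨lambdaMap_add X w, lambdaMap_smul X w, lambdaMap_mul X w, lambdaMap_star X w, ?_⟩
  intro f hf
  have hf' : f ∈ closure ((NonUnitalStarAlgebra.adjoin ℂ
      {f : Linf X | ∃ u v : List 𝔞, f = chi X (cyl X u v)} : NonUnitalStarSubalgebra ℂ (Linf X)) :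
        Set (Linf X)) := hf
  have hmaps : Set.MapsTo (lambdaMap X w)
      ((NonUnitalStarAlgebra.adjoin ℂ
        {f : Linf X | ∃ u v : List 𝔞, f = chi X (cyl X u v)} :
          NonUnitalStarSubalgebra ℂ (Linf X)) : Set (Linf X))
      ((Dalg X : Set (Linf X))) := by
    intro g hg
    have hg' : g ∈ NonUnitalStarAlgebra.adjoin ℂ
        {f : Linf X | ∃ u v : List 𝔞, f = chi X (cyl X u v)} := hg
    clear hg
    induction hg' using NonUnitalStarAlgebra.adjoin_induction with
    | mem a ha =>
      obtain ⟨u, v, rfl⟩ := ha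
      exact lambdaMap_chi_mem hXinv w u v
    | add a b ha hb iha ihb =>
      rw [lambdaMap_add]; exact add_mem iha ihb
    | zero =>
      have h0 : lambdaMap X w (0 : Linf X) = 0 := by
        have := lambdaMap_smul X w 0 0
        simpa using this
      rw [h0]; exact zero_mem _
    | mul a b ha hb iha ihb =>
      rw [lambdaMap_mul]; exact mul_mem iha ihb
    | smul c a ha iha =>
      rw [lambdaMap_smul]; exact SMulMemClass.smul_mem c iha
    | star a ha iha =>
      rw [lambdaMap_star]; exact star_mem iha
  have hmem := map_mem_closure (lambdaMap_continuous X w) hf' hmaps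
  have hclosed : IsClosed ((Dalg X : Set (Linf X))) :=
    (NonUnitalStarAlgebra.adjoin ℂ _).isClosed_topologicalClosure
  rwa [hclosed.closure_eq] at hmem

end
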